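/- arXiv:2312.07470 — 8 statements merged into one kernel-verified Lean document; each statement's English description precedes it below -/
import Mathlib

section
/- Let z = x + iy be a complex number with y ≠ 0 or x² ≥ 1, let r₁ = |z−1|, r₂ = |z+1|, α = (r₁+r₂)/2, β = (r₂−r₁)/2. Then the complex number X(z) = β·√(α²−1) + i·sign(y)·α·√(1−β²) satisfies X(z)² = z² − 1. -/
open Complex

/-- `α(w) = (|w-1| + |w+1|)/2`. -/
noncomputable def alpha (w : ℂ) : ℝ := (‖w - 1‖ + ‖w + 1‖) / 2

/-- `β(w) = (|w+1| - |w-1|)/2`. -/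
noncomputable def beta (w : ℂ) : ℝ := (‖w + 1‖ - ‖w - 1‖) / 2

/-- Principal branch `X(w)` of `√(w²-1)` on the cut plane `ℂ ∖ (-1, 1)`. -/
noncomputable def X (w : ℂ) : ℂ :=
  (beta w * Real.sqrt ((alpha w) ^ 2 - 1) : ℝ) +
    Complex.I * (Real.sign w.im : ℝ) * (alpha w * Real.sqrt (1 - (beta w) ^ 2) : ℝ)

theorem stmt3 (z : ℂ) (h : z.im ≠ 0 ∨ 1 ≤ z.re ^ 2) : (X z) ^ 2 = z ^ 2 - 1 := by
  have h1 : ‖z - 1‖ ^ 2 = (z.re - 1) ^ 2 + z.im ^ 2 := by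
    rw [Complex.sq_norm, Complex.normSq_apply]
    simp
    ring
  have h2 : ‖z + 1‖ ^ 2 = (z.re + 1) ^ 2 + z.im ^ 2 := by
    rw [Complex.sq_norm, Complex.normSq_apply]
    simp
    ring
  set x := z.re with hxdef
  set y := z.im with hydef
  set a := alpha z with hadef
  set b := beta z with hbdef
  have hab : a * b = x := by
    rw [hadef, hbdef]; unfold alpha beta; linear_combination (h2 - h1) / 4
  have hsum : a ^ 2 + b ^ 2 = x ^ 2 + y ^ 2 + 1 := by
    rw [hadef, hbdef]; unfold alpha beta; linear_combination (h1 + h2) / 2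
  have ha1 : 1 ≤ a := by
    have ht : ‖(z + 1) - (z - 1)‖ ≤ ‖z + 1‖ + ‖z - 1‖ := norm_sub_le _ _
    have h2' : (z + 1) - (z - 1) = 2 := by ring
    rw [h2'] at ht
    simp at ht
    rw [hadef]; unfold alpha
    linarith
  have hb1 : b ^ 2 ≤ 1 := by
    have ht : |‖(z + 1 : ℂ)‖ - ‖(z - 1 : ℂ)‖| ≤ ‖(z + 1) - (z - 1)‖ := abs_norm_sub_norm_le _ _
    have h2' : (z + 1) - (z - 1) = 2 := by ring
    rw [h2'] at ht
    simp at ht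
    rw [abs_le] at ht
    have hb' : -1 ≤ b ∧ b ≤ 1 := by
      constructor <;> (rw [hbdef]; unfold beta; cases ht; linarith)
    nlinarith [hb'.1, hb'.2]
  set A := Real.sqrt (a ^ 2 - 1) with hAdef
  set B := Real.sqrt (1 - b ^ 2) with hBdef
  set s := Real.sign y with hsdef
  have hA : A ^ 2 = a ^ 2 - 1 := Real.sq_sqrt (by nlinarith)
  have hB : B ^ 2 = 1 - b ^ 2 := Real.sq_sqrt (by linarith)
  have hXre : (X z).re = b * A := by
    simp [X, ← hadef, ← hbdef, ← hAdef, ← hBdef, ← hsdef, ← hxdef, ← hydef]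
  have hXim : (X z).im = s * (a * B) := by
    simp [X, ← hadef, ← hbdef, ← hAdef, ← hBdef, ← hsdef, ← hxdef, ← hydef]
  rw [pow_two, pow_two, Complex.ext_iff, Complex.sub_re, Complex.sub_im,
    Complex.mul_re, Complex.mul_im, Complex.mul_re, Complex.mul_im, hXre, hXim,
    Complex.one_re, Complex.one_im, ← hxdef, ← hydef]
  rcases eq_or_ne y 0 with hy0 | hy0
  · -- y = 0 case
    have hx2 : 1 ≤ x ^ 2 := h.resolve_left (not_not_intro hy0)
    have hs0 : s = 0 := by rw [hsdef, hy0, Real.sign_zero]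
    have hsum0 : a ^ 2 + b ^ 2 = x ^ 2 + 1 := by rw [hy0] at hsum; linarith [hsum]
    have hq : (a ^ 2 - 1) * (1 - b ^ 2) = 0 := by
      linear_combination hsum0 - (a * b + x) * hab
    have hb2 : b ^ 2 = 1 := by
      rcases mul_eq_zero.mp hq with h' | h'
      · have hxab : x ^ 2 = a ^ 2 * b ^ 2 := by linear_combination (-(a * b) - x) * hab
        nlinarith
      · linarith
    have ha2 : a ^ 2 = x ^ 2 := by linarith
    have hA2 : A ^ 2 = x ^ 2 - 1 := by rw [hA, ha2]
    constructor
    · rw [hs0]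
      linear_combination b ^ 2 * hA2 + (x ^ 2 - 1) * hb2 + y * hy0
    · linear_combination (2 * a * b * A * B) * hs0 + (-(2 * x)) * hy0
  · -- y ≠ 0 case
    have hs2 : s ^ 2 = 1 := by
      rcases Real.sign_apply_eq_of_ne_zero y hy0 with h' | h' <;> rw [hsdef, h'] <;> norm_num
    have hsy : s * |y| = y := by
      rcases lt_trichotomy y 0 with h' | h' | h'
      · rw [hsdef, Real.sign_of_neg h', abs_of_neg h']; ring
      · exact absurd h' hy0
      · rw [hsdef, Real.sign_of_pos h', abs_of_pos h']; ring
    have hAB : A * B = |y| := by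
      rw [hAdef, hBdef, ← Real.sqrt_mul (by nlinarith)]
      have hyy : (a ^ 2 - 1) * (1 - b ^ 2) = y ^ 2 := by
        linear_combination hsum - (a * b + x) * hab
      rw [hyy, Real.sqrt_sq_eq_abs]
    constructor
    · linear_combination b ^ 2 * hA + (-(a ^ 2 * B ^ 2)) * hs2 + (-(a ^ 2)) * hB - hsum +
        (2 * (a * b + x)) * hab
    · linear_combination (2 * a * b * s) * hAB + (2 * a * b) * hsy + 2 * y * hab
end

section
/- Let z = x + iy be a complex number with y ≠ 0. Then the function X, defined by X(w) = β(w)·√(α(w)²−1) + i·sign(Im w)·α(w)·√(1−β(w)²) with α(w) = (|w−1|+|w+1|)/2 and β(w) = (|w+1|−|w−1|)/2, is complex differentiable at z with derivative X′(z) = z/X(z). -/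
open Complex

lemma alpha_mul_beta (w : ℂ) : alpha w * beta w = w.re := by
  have ha : ‖w - 1‖ ^ 2 = (w.re - 1)^2 + w.im^2 := by
    rw [← Complex.normSq_eq_norm_sq]; simp [Complex.normSq_apply]; ring
  have hb : ‖w + 1‖ ^ 2 = (w.re + 1)^2 + w.im^2 := by
    rw [← Complex.normSq_eq_norm_sq]; simp [Complex.normSq_apply]; ring
  unfold alpha beta
  nlinarith [ha, hb]

lemma alpha_beta_sq (w : ℂ) : alpha w ^ 2 + beta w ^ 2 = w.re^2 + w.im^2 + 1 := by
  have ha : ‖w - 1‖ ^ 2 = (w.re - 1)^2 + w.im^2 := by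
    rw [← Complex.normSq_eq_norm_sq]; simp [Complex.normSq_apply]; ring
  have hb : ‖w + 1‖ ^ 2 = (w.re + 1)^2 + w.im^2 := by
    rw [← Complex.normSq_eq_norm_sq]; simp [Complex.normSq_apply]; ring
  unfold alpha beta
  nlinarith [ha, hb]

lemma one_le_alpha (w : ℂ) : 1 ≤ alpha w := by
  have h2 : (2:ℝ) ≤ ‖w+1‖ + ‖w-1‖ := by
    calc (2:ℝ) = ‖(w+1)+(1-w)‖ := by rw [show (w:ℂ)+1+(1-w) = 2 by ring]; simp
    _ ≤ ‖w+1‖ + ‖1-w‖ := norm_add_le _ _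
    _ = ‖w+1‖ + ‖w-1‖ := by rw [norm_sub_rev]
  unfold alpha; linarith

lemma beta_sq_le_one (w : ℂ) : beta w ^ 2 ≤ 1 := by
  have h2 : |‖w+1‖ - ‖w-1‖| ≤ ‖(w+1) - (w-1)‖ := by
    exact abs_norm_sub_norm_le (w+1) (w-1)
  have h3 : ‖(w+1) - (w-1)‖ = 2 := by norm_num
  have := abs_le.mp (h3 ▸ h2)
  unfold beta; nlinarith [this.1, this.2]

lemma X_sq (w : ℂ) (h : w.im ≠ 0) : X w ^ 2 = w ^ 2 - 1 := by
  have hαβ := alpha_mul_beta w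
  have hsum := alpha_beta_sq w
  have hα := one_le_alpha w
  have hβ := beta_sq_le_one w
  have hA : (0:ℝ) ≤ alpha w ^ 2 - 1 := by nlinarith
  have hB : (0:ℝ) ≤ 1 - beta w ^ 2 := by linarith
  have hx2 : (alpha w * beta w) ^ 2 = w.re ^ 2 := by rw [hαβ]
  have hprod : (alpha w ^ 2 - 1) * (1 - beta w ^ 2) = w.im ^ 2 := by
    linear_combination hsum - hx2
  have hsq : Real.sqrt (alpha w ^ 2 - 1) * Real.sqrt (1 - beta w ^ 2) = |w.im| := by
    rw [← Real.sqrt_mul hA, hprod, Real.sqrt_sq_eq_abs]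
  have hsA : Real.sqrt (alpha w ^ 2 - 1) ^ 2 = alpha w ^ 2 - 1 := Real.sq_sqrt hA
  have hsB : Real.sqrt (1 - beta w ^ 2) ^ 2 = 1 - beta w ^ 2 := Real.sq_sqrt hB
  have hs2 : Real.sign w.im ^ 2 = 1 := by
    rcases h.lt_or_gt with hn | hp'
    · rw [Real.sign_of_neg hn]; ring
    · rw [Real.sign_of_pos hp']; ring
  have hsmul : Real.sign w.im * |w.im| = w.im := by
    rcases h.lt_or_gt with hn | hp'
    · rw [Real.sign_of_neg hn, abs_of_neg hn]; ring
    · rw [Real.sign_of_pos hp', abs_of_pos hp']; ring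
  set p := beta w * Real.sqrt (alpha w ^ 2 - 1) with hp
  set q := Real.sign w.im * (alpha w * Real.sqrt (1 - beta w ^ 2)) with hq
  have hXw : X w = Complex.mk p q := by
    apply Complex.ext <;> simp [X, hp, hq]
  have e1 : p ^ 2 = beta w ^ 2 * (alpha w ^ 2 - 1) := by rw [hp, mul_pow, hsA]
  have e2 : q ^ 2 = alpha w ^ 2 * (1 - beta w ^ 2) := by
    rw [hq, mul_pow, mul_pow, hsB, hs2, one_mul]
  have hre : p ^ 2 - q ^ 2 = w.re ^ 2 - w.im ^ 2 - 1 := by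
    rw [e1, e2]; linear_combination 2*hx2 - hsum
  have him : p * q = w.re * w.im := by
    have e3 : p * q = (alpha w * beta w) * (Real.sign w.im *
        (Real.sqrt (alpha w ^ 2 - 1) * Real.sqrt (1 - beta w ^ 2))) := by
      rw [hp, hq]; ring
    rw [e3, hsq, hαβ, hsmul]
  rw [hXw, Complex.ext_iff]
  constructor
  · simp [pow_two, Complex.mul_re, Complex.sub_re]
    linear_combination hre
  · simp [pow_two, Complex.mul_im, Complex.sub_im]
    linear_combination 2*him

lemma X_contAt (z : ℂ) (h : z.im ≠ 0) : ContinuousAt X z := by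
  have hcα : Continuous alpha := by
    unfold alpha
    exact ((continuous_norm.comp (continuous_id.sub continuous_const)).add
      (continuous_norm.comp (continuous_id.add continuous_const))).div_const 2
  have hcβ : Continuous beta := by
    unfold beta
    exact ((continuous_norm.comp (continuous_id.add continuous_const)).sub
      (continuous_norm.comp (continuous_id.sub continuous_const))).div_const 2
  have hY : ContinuousAt (fun w : ℂ =>
      ((beta w * Real.sqrt (alpha w ^ 2 - 1) : ℝ) : ℂ) +
        Complex.I * ((Real.sign z.im : ℝ) : ℂ) *
          ((alpha w * Real.sqrt (1 - beta w ^ 2) : ℝ) : ℂ)) z := by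
    apply ContinuousAt.add
    · exact (Complex.continuous_ofReal.comp
        (hcβ.mul (Real.continuous_sqrt.comp ((hcα.pow 2).sub continuous_const)))).continuousAt
    · exact (continuous_const.mul (Complex.continuous_ofReal.comp
        (hcα.mul (Real.continuous_sqrt.comp
          (continuous_const.sub (hcβ.pow 2)))))).continuousAt
  apply hY.congr
  have hs : ∀ᶠ w in nhds z, Real.sign w.im = Real.sign z.im := by
    rcases h.lt_or_gt with hn | hp
    · have ho : IsOpen {w : ℂ | w.im < 0} := isOpen_lt Complex.continuous_im continuous_const
      filter_upwards [ho.mem_nhds hn] with w hw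
      rw [Real.sign_of_neg hw, Real.sign_of_neg hn]
    · have ho : IsOpen {w : ℂ | 0 < w.im} := isOpen_lt continuous_const Complex.continuous_im
      filter_upwards [ho.mem_nhds hp] with w hw
      rw [Real.sign_of_pos hw, Real.sign_of_pos hp]
  filter_upwards [hs] with w hw
  simp [X, hw]

theorem stmt4 (z : ℂ) (h : z.im ≠ 0) : HasDerivAt X (z / X z) z := by
  have hXz2 : X z ^ 2 = z ^ 2 - 1 := X_sq z h
  have hz1 : z ^ 2 - 1 ≠ 0 := by
    intro h'
    have h2 : (z - 1) * (z + 1) = 0 := by linear_combination h'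
    rcases mul_eq_zero.mp h2 with h1 | h1
    · rw [sub_eq_zero] at h1; rw [h1] at h; simp at h
    · have : z = -1 := by linear_combination h1
      rw [this] at h; simp at h
  have hX0 : X z ≠ 0 := by
    intro h0; apply hz1; rw [← hXz2, h0]; ring
  have hc0 : (X z) ^ 2 ≠ 0 := pow_ne_zero 2 hX0
  have hval : (z ^ 2 - 1) / (X z) ^ 2 = 1 := by
    rw [div_eq_one_iff_eq hc0]; exact hXz2.symm
  set F : ℂ → ℂ := fun w => X z * Complex.exp ((1/2 : ℂ) * Complex.log ((w ^ 2 - 1) / (X z) ^ 2)) with hF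
  have h1 : HasDerivAt (fun w : ℂ => (w ^ 2 - 1) / (X z) ^ 2) (2 * z / (X z) ^ 2) z := by
    simpa using ((hasDerivAt_pow 2 z).sub_const 1).div_const ((X z) ^ 2)
  have h2 : HasDerivAt Complex.log 1 ((z ^ 2 - 1) / (X z) ^ 2) := by
    rw [hval]
    simpa using Complex.hasDerivAt_log (by simp [Complex.slitPlane] : (1:ℂ) ∈ Complex.slitPlane)
  have h3 := h2.comp z h1
  have h4 := h3.const_mul (1/2 : ℂ)
  have h5 : HasDerivAt Complex.exp
      (Complex.exp ((1/2 : ℂ) * Complex.log ((z ^ 2 - 1) / (X z) ^ 2)))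
      ((1/2 : ℂ) * Complex.log ((z ^ 2 - 1) / (X z) ^ 2)) := Complex.hasDerivAt_exp _
  have h6 := h5.comp z h4
  have h7 := h6.const_mul (X z)
  have hFz : F z = X z := by
    rw [hF]; simp [hval]
  have hderiv : X z * (Complex.exp ((1/2 : ℂ) * Complex.log ((z ^ 2 - 1) / (X z) ^ 2)) *
      ((1/2 : ℂ) * (1 * (2 * z / (X z) ^ 2)))) = z / X z := by
    rw [hval]
    simp only [Complex.log_one, mul_zero, Complex.exp_zero, one_mul]
    field_simp
  have hFd : HasDerivAt F (z / X z) z := by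
    rw [← hderiv]; exact h7
  -- F w ^ 2 = w ^ 2 - 1 eventually
  have hct : ContinuousAt (fun w : ℂ => w ^ 2 - 1) z := by fun_prop
  have hne : ∀ᶠ w in nhds z, w ^ 2 - 1 ≠ 0 := hct.eventually_ne hz1
  have hFsq : ∀ᶠ w in nhds z, F w ^ 2 = w ^ 2 - 1 := by
    filter_upwards [hne] with w hw
    have hu : (w ^ 2 - 1) / (X z) ^ 2 ≠ 0 := div_ne_zero hw hc0
    have : Complex.exp ((1/2 : ℂ) * Complex.log ((w ^ 2 - 1) / (X z) ^ 2)) ^ 2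
        = (w ^ 2 - 1) / (X z) ^ 2 := by
      rw [sq, ← Complex.exp_add]
      rw [show (1/2 : ℂ) * Complex.log ((w ^ 2 - 1) / (X z) ^ 2) +
        (1/2 : ℂ) * Complex.log ((w ^ 2 - 1) / (X z) ^ 2)
        = Complex.log ((w ^ 2 - 1) / (X z) ^ 2) by ring]
      exact Complex.exp_log hu
    rw [hF]; simp only [mul_pow, this]
    field_simp
  have hXsq : ∀ᶠ w in nhds z, X w ^ 2 = w ^ 2 - 1 := by
    have ho : IsOpen {w : ℂ | w.im ≠ 0} :=
      isOpen_ne_fun Complex.continuous_im continuous_const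
    filter_upwards [ho.mem_nhds h] with w hw
    exact X_sq w hw
  have hsum_ne : ∀ᶠ w in nhds z, X w + F w ≠ 0 := by
    have hcs : ContinuousAt (fun w => X w + F w) z :=
      (X_contAt z h).add hFd.differentiableAt.continuousAt
    apply hcs.eventually_ne
    rw [hFz]
    intro h'
    apply hX0
    have : (2:ℂ) * X z = 0 := by linear_combination h'
    simpa using this
  have hXF : X =ᶠ[nhds z] F := by
    filter_upwards [hXsq, hFsq, hsum_ne] with w h1 h2 h3
    have hmul : (X w - F w) * (X w + F w) = 0 := by linear_combination h1 - h2
    rcases mul_eq_zero.mp hmul with h4 | h4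
    · exact sub_eq_zero.mp h4
    · exact absurd h4 h3
  exact hFd.congr_of_eventuallyEq hXF
end

section
/- Let z = x + iy be a complex number with y ≠ 0, let r₁ = |z−1|, r₂ = |z+1|, α = (r₁+r₂)/2, β = (r₂−r₁)/2, and let Y(z) = α·√(1−β²) − i·sign(y)·β·√(α²−1). Let X₁(z) = √((r₁+(x−1))/2) + i·sign(y)·√((r₁−(x−1))/2) and X₂(z) = √((r₂+(x+1))/2) + i·sign(y)·√((r₂−(x+1))/2). Then Y(z) = −i·sign(y)·X₁(z)·X₂(z). -/
open Complex

/-- Principal branch `Y(w)` of `√(1-w²)`. -/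
noncomputable def Y (w : ℂ) : ℂ :=
  (alpha w * Real.sqrt (1 - (beta w) ^ 2) : ℝ) -
    Complex.I * (Real.sign w.im : ℝ) * (beta w * Real.sqrt ((alpha w) ^ 2 - 1) : ℝ)

/-- Principal branch `X₁(w)` of `√(w-1)`. -/
noncomputable def X₁ (w : ℂ) : ℂ :=
  (Real.sqrt ((‖w - 1‖ + (w.re - 1)) / 2) : ℝ) +
    Complex.I * (Real.sign w.im : ℝ) *
      (Real.sqrt ((‖w - 1‖ - (w.re - 1)) / 2) : ℝ)

/-- Principal branch `X₂(w)` of `√(w+1)`. -/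
noncomputable def X₂ (w : ℂ) : ℂ :=
  (Real.sqrt ((‖w + 1‖ + (w.re + 1)) / 2) : ℝ) +
    Complex.I * (Real.sign w.im : ℝ) *
      (Real.sqrt ((‖w + 1‖ - (w.re + 1)) / 2) : ℝ)

private lemma aux_sqrt (c u v : ℝ) (hc : 0 ≤ c) (hu : 0 ≤ u) :
    Real.sqrt (c * u) * Real.sqrt (c * v) = c * Real.sqrt (u * v) := by
  rw [← Real.sqrt_mul (mul_nonneg hc hu), show c * u * (c * v) = c ^ 2 * (u * v) by ring,
    Real.sqrt_mul (sq_nonneg c), Real.sqrt_sq hc]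

private lemma aux_key (A1 B1 A2 B2 al be sa sb s : ℝ) (hs : s = 1 ∨ s = -1)
    (h1 : A1 * B2 + A2 * B1 = al * sb) (h2 : A1 * A2 - B1 * B2 = be * sa) :
    ((al * sb : ℝ) : ℂ) - Complex.I * (s : ℝ) * ((be * sa : ℝ) : ℂ) =
      -Complex.I * (s : ℝ) *
        (((A1 : ℝ) + Complex.I * (s : ℝ) * ((B1 : ℝ) : ℂ)) *
          (((A2 : ℝ) : ℂ) + Complex.I * (s : ℝ) * ((B2 : ℝ) : ℂ))) := by
  have h1c := congrArg Complex.ofReal h1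
  have h2c := congrArg Complex.ofReal h2
  push_cast at h1c h2c
  push_cast
  have hI : Complex.I ^ 2 = -1 := Complex.I_sq
  rcases hs with rfl | rfl
  · push_cast
    linear_combination -h1c + Complex.I * h2c +
      ((A1 : ℂ) * B2 + (A2 : ℂ) * B1 + Complex.I * B1 * B2) * hI
  · push_cast
    linear_combination -h1c - Complex.I * h2c +
      ((A1 : ℂ) * B2 + (A2 : ℂ) * B1 - Complex.I * B1 * B2) * hI

theorem stmt5 (z : ℂ) (h : z.im ≠ 0) :
    Y z = -Complex.I * (Real.sign z.im : ℝ) * (X₁ z * X₂ z) := by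
  have hsq1 : (‖z - 1‖) ^ 2 = (z.re - 1) ^ 2 + z.im ^ 2 := by
    rw [Complex.sq_norm, Complex.normSq_apply]
    simp [Complex.sub_re, Complex.sub_im]
    ring
  have hsq2 : (‖z + 1‖) ^ 2 = (z.re + 1) ^ 2 + z.im ^ 2 := by
    rw [Complex.sq_norm, Complex.normSq_apply]
    simp [Complex.add_re, Complex.add_im]
    ring
  have hx : (‖z + 1‖) ^ 2 - (‖z - 1‖) ^ 2 = 4 * z.re := by
    rw [hsq1, hsq2]; ring
  have htri : (2 : ℝ) ≤ ‖z - 1‖ + ‖z + 1‖ := by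
    have h1 : ‖(z + 1) + (1 - z)‖ ≤ ‖z + 1‖ + ‖1 - z‖ :=
      norm_add_le _ _
    rw [show (z + 1) + (1 - z) = 2 by ring, show (1 : ℂ) - z = -(z - 1) by ring,
      norm_neg, Complex.norm_two] at h1
    linarith
  have hbb : |‖z + 1‖ - ‖z - 1‖| ≤ 2 := by
    have h1 := abs_norm_sub_norm_le (z + 1) (z - 1)
    rw [show (z + 1) - (z - 1) = 2 by ring, Complex.norm_two] at h1
    exact h1
  obtain ⟨hbl, hbu⟩ := abs_le.mp hbb
  have ha1 : 1 ≤ alpha z := by rw [alpha]; linarith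
  have hbl' : -1 ≤ beta z := by rw [beta]; linarith
  have hbu' : beta z ≤ 1 := by rw [beta]; linarith
  -- factorizations of the sqrt arguments
  have e1 : (‖z - 1‖ + (z.re - 1)) / 2 = ((alpha z - 1) / 2) * (1 + beta z) := by
    simp only [alpha, beta]; linear_combination (-1/8 : ℝ) * hx
  have e1' : (‖z - 1‖ + (z.re - 1)) / 2 = ((1 + beta z) / 2) * (alpha z - 1) := by
    rw [e1]; ring
  have e2 : (‖z - 1‖ - (z.re - 1)) / 2 = ((alpha z + 1) / 2) * (1 - beta z) := by
    simp only [alpha, beta]; linear_combination (1/8 : ℝ) * hx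
  have e2' : (‖z - 1‖ - (z.re - 1)) / 2 = ((1 - beta z) / 2) * (alpha z + 1) := by
    rw [e2]; ring
  have e3 : (‖z + 1‖ + (z.re + 1)) / 2 = ((alpha z + 1) / 2) * (1 + beta z) := by
    simp only [alpha, beta]; linear_combination (-1/8 : ℝ) * hx
  have e3' : (‖z + 1‖ + (z.re + 1)) / 2 = ((1 + beta z) / 2) * (alpha z + 1) := by
    rw [e3]; ring
  have e4 : (‖z + 1‖ - (z.re + 1)) / 2 = ((alpha z - 1) / 2) * (1 - beta z) := by
    simp only [alpha, beta]; linear_combination (1/8 : ℝ) * hx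
  have e4' : (‖z + 1‖ - (z.re + 1)) / 2 = ((1 - beta z) / 2) * (alpha z - 1) := by
    rw [e4]; ring
  have q1 : Real.sqrt ((‖z - 1‖ + (z.re - 1)) / 2) *
        Real.sqrt ((‖z + 1‖ - (z.re + 1)) / 2)
      = ((alpha z - 1) / 2) * Real.sqrt ((1 + beta z) * (1 - beta z)) := by
    rw [e1, e4]; exact aux_sqrt _ _ _ (by linarith) (by linarith)
  have q2 : Real.sqrt ((‖z + 1‖ + (z.re + 1)) / 2) *
        Real.sqrt ((‖z - 1‖ - (z.re - 1)) / 2)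
      = ((alpha z + 1) / 2) * Real.sqrt ((1 + beta z) * (1 - beta z)) := by
    rw [e2, e3]; exact aux_sqrt _ _ _ (by linarith) (by linarith)
  have q3 : Real.sqrt ((‖z - 1‖ + (z.re - 1)) / 2) *
        Real.sqrt ((‖z + 1‖ + (z.re + 1)) / 2)
      = ((1 + beta z) / 2) * Real.sqrt ((alpha z - 1) * (alpha z + 1)) := by
    rw [e1', e3']; exact aux_sqrt _ _ _ (by linarith) (by linarith)
  have q4 : Real.sqrt ((‖z - 1‖ - (z.re - 1)) / 2) *
        Real.sqrt ((‖z + 1‖ - (z.re + 1)) / 2)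
      = ((1 - beta z) / 2) * Real.sqrt ((alpha z - 1) * (alpha z + 1)) := by
    rw [e2', e4', aux_sqrt _ _ _ (by linarith) (by linarith),
      show (alpha z + 1) * (alpha z - 1) = (alpha z - 1) * (alpha z + 1) by ring]
  rw [show (1 + beta z) * (1 - beta z) = 1 - beta z ^ 2 by ring] at q1 q2
  rw [show (alpha z - 1) * (alpha z + 1) = alpha z ^ 2 - 1 by ring] at q3 q4
  have h1 : Real.sqrt ((‖z - 1‖ + (z.re - 1)) / 2) *
        Real.sqrt ((‖z + 1‖ - (z.re + 1)) / 2)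
      + Real.sqrt ((‖z + 1‖ + (z.re + 1)) / 2) *
        Real.sqrt ((‖z - 1‖ - (z.re - 1)) / 2)
      = alpha z * Real.sqrt (1 - beta z ^ 2) := by rw [q1, q2]; ring
  have h2 : Real.sqrt ((‖z - 1‖ + (z.re - 1)) / 2) *
        Real.sqrt ((‖z + 1‖ + (z.re + 1)) / 2)
      - Real.sqrt ((‖z - 1‖ - (z.re - 1)) / 2) *
        Real.sqrt ((‖z + 1‖ - (z.re + 1)) / 2)
      = beta z * Real.sqrt (alpha z ^ 2 - 1) := by rw [q3, q4]; ring
  have hs : Real.sign z.im = 1 ∨ Real.sign z.im = -1 := by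
    rcases h.lt_or_gt with hy | hy
    · exact Or.inr (Real.sign_of_neg hy)
    · exact Or.inl (Real.sign_of_pos hy)
  rw [Y, X₁, X₂]
  exact aux_key _ _ _ _ _ _ _ _ _ hs h1 h2
end

section
/- Let z = x + iy be a complex number with y ≠ 0 or x² ≤ 1, let r₁ = |z−1|, r₂ = |z+1|, α = (r₁+r₂)/2, β = (r₂−r₁)/2. Then the complex number Y(z) = α·√(1−β²) − i·sign(y)·β·√(α²−1) satisfies Y(z)² = 1 − z². -/
open Complex

set_option maxHeartbeats 1000000 in
theorem stmt6 (z : ℂ) (h : z.im ≠ 0 ∨ z.re ^ 2 ≤ 1) : (Y z) ^ 2 = 1 - z ^ 2 := by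
  set x := z.re with hx
  set y := z.im with hy
  set a := alpha z with ha
  set b := beta z with hb
  have hr1 : (‖z - 1‖) ^ 2 = (x - 1) ^ 2 + y ^ 2 := by
    rw [Complex.sq_norm, Complex.normSq_apply]
    simp [← hx, ← hy]
    ring
  have hr2 : (‖z + 1‖) ^ 2 = (x + 1) ^ 2 + y ^ 2 := by
    rw [Complex.sq_norm, Complex.normSq_apply]
    simp [← hx, ← hy]
    ring
  have hab : a * b = x := by
    have e : a * b = ((‖z + 1‖) ^ 2 - (‖z - 1‖) ^ 2) / 4 := by
      rw [ha, hb, alpha, beta]; ring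
    rw [e, hr1, hr2]; ring
  have hs : a ^ 2 + b ^ 2 = x ^ 2 + y ^ 2 + 1 := by
    have e : a ^ 2 + b ^ 2 = ((‖z + 1‖) ^ 2 + (‖z - 1‖) ^ 2) / 2 := by
      rw [ha, hb, alpha, beta]; ring
    rw [e, hr1, hr2]; ring
  have ha1 : 1 ≤ a := by
    have h2 := norm_sub_le_norm_sub_add_norm_sub (z + 1) 0 (z - 1)
    simp only [sub_zero, zero_sub, norm_neg] at h2
    have h3 : ‖z + 1 - (z - 1)‖ = 2 := by norm_num
    rw [h3] at h2
    rw [ha, alpha]; linarith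
  have hb1 : b ^ 2 ≤ 1 := by
    have h2 : |‖z + 1‖ - ‖z - 1‖| ≤ ‖(z + 1) - (z - 1)‖ :=
      abs_norm_sub_norm_le _ _
    have h3 : ‖(z + 1) - (z - 1)‖ = 2 := by norm_num
    rw [h3, abs_le] at h2
    rw [hb, beta]; nlinarith [h2.1, h2.2]
  have hbnn : (0:ℝ) ≤ 1 - b ^ 2 := by linarith
  have hann : (0:ℝ) ≤ a ^ 2 - 1 := by nlinarith
  have hprod : (1 - b ^ 2) * (a ^ 2 - 1) = y ^ 2 := by nlinarith [hab, hs]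
  have hsq : Real.sqrt (1 - b ^ 2) * Real.sqrt (a ^ 2 - 1) = |y| := by
    rw [← Real.sqrt_mul hbnn, hprod, Real.sqrt_sq_eq_abs]
  set s := Real.sign y with hsgn
  set A := a * Real.sqrt (1 - b ^ 2) with hA
  set B := b * Real.sqrt (a ^ 2 - 1) with hB
  have hYz : Y z = (A : ℂ) - Complex.I * (s : ℂ) * (B : ℂ) := rfl
  have hz : z = (x : ℂ) + (y : ℂ) * Complex.I := (Complex.re_add_im z).symm
  have hY2 : (Y z) ^ 2 = ((A ^ 2 - s ^ 2 * B ^ 2 : ℝ) : ℂ) + ((-(2 * A * s * B) : ℝ) : ℂ) * Complex.I := by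
    rw [hYz]
    push_cast
    ring_nf
    rw [Complex.I_sq]
    ring
  have hRHS : 1 - z ^ 2 = ((1 - x ^ 2 + y ^ 2 : ℝ) : ℂ) + ((-(2 * x * y) : ℝ) : ℂ) * Complex.I := by
    rw [hz]
    push_cast
    ring_nf
    rw [Complex.I_sq]
    ring
  rw [hY2, hRHS]
  have him : A * s * B = x * y := by
    have e : A * B = x * |y| := by
      rw [hA, hB]
      calc a * Real.sqrt (1 - b ^ 2) * (b * Real.sqrt (a ^ 2 - 1))
          = (a * b) * (Real.sqrt (1 - b ^ 2) * Real.sqrt (a ^ 2 - 1)) := by ring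
        _ = x * |y| := by rw [hab, hsq]
    have e2 : s * |y| = y := by
      rcases lt_trichotomy y 0 with hlt | heq | hgt
      · rw [hsgn, Real.sign_of_neg hlt, _root_.abs_of_neg hlt]; ring
      · rw [heq, hsgn, heq, Real.sign_zero]; simp
      · rw [hsgn, Real.sign_of_pos hgt, _root_.abs_of_pos hgt]; ring
    calc A * s * B = (A * B) * s := by ring
      _ = x * (s * |y|) := by rw [e]; ring
      _ = x * y := by rw [e2]
  have hre : A ^ 2 - s ^ 2 * B ^ 2 = 1 - x ^ 2 + y ^ 2 := by
    have hA2 : A ^ 2 = a ^ 2 * (1 - b ^ 2) := by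
      rw [hA, mul_pow, Real.sq_sqrt hbnn]
    have hB2 : B ^ 2 = b ^ 2 * (a ^ 2 - 1) := by
      rw [hB, mul_pow, Real.sq_sqrt hann]
    rcases eq_or_ne y 0 with hy0 | hy0
    · have hx1 : x ^ 2 ≤ 1 := by
        rcases h with h | h
        · exact absurd hy0 h
        · exact h
      have hxle : x ≤ 1 := by nlinarith
      have hxge : -1 ≤ x := by nlinarith
      have hzr : z = (x : ℂ) := by
        apply Complex.ext
        · simp [← hx]
        · simp [← hy, hy0]
      have e1 : ‖z - 1‖ = |x - 1| := by
        rw [hzr, ← Complex.ofReal_one, ← Complex.ofReal_sub, Complex.norm_real, Real.norm_eq_abs]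
      have e2 : ‖z + 1‖ = |x + 1| := by
        rw [hzr, ← Complex.ofReal_one, ← Complex.ofReal_add, Complex.norm_real, Real.norm_eq_abs]
      have ha' : a = 1 := by
        rw [ha, alpha, e1, e2, _root_.abs_of_nonpos (by linarith), _root_.abs_of_nonneg (by linarith)]
        ring
      have ha2 : a ^ 2 = 1 := by rw [ha']; norm_num
      have hy2 : y ^ 2 = 0 := by rw [hy0]; ring
      have hbx : b ^ 2 = x ^ 2 := by linarith
      have hB0 : B ^ 2 = 0 := by rw [hB2, ha2]; ring
      rw [hA2, hB0, ha2, hbx]; linarith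
    · have hs2 : s ^ 2 = 1 := by
        rcases lt_trichotomy y 0 with hlt | heq | hgt
        · rw [hsgn, Real.sign_of_neg hlt]; norm_num
        · exact absurd heq hy0
        · rw [hsgn, Real.sign_of_pos hgt]; norm_num
      have hx2 : a ^ 2 * b ^ 2 = x ^ 2 := by rw [← hab]; ring
      rw [hA2, hB2, hs2]
      linear_combination hs - 2 * hx2
  have him' : -(2 * A * s * B) = -(2 * x * y) := by linear_combination (-2 : ℝ) * him
  rw [hre, him']
end

section
/- Let z = x + iy be a complex number with y ≠ 0 or x² ≤ 1, let r₁ = |z−1|, r₂ = |z+1|, α = (r₁+r₂)/2, β = (r₂−r₁)/2, and let S(z) = arcsin(β) + i·sign(y)·arcosh(α). Then sin(S(z)) = z, where sin is the complex sine function. -/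
open Complex

/-- Real inverse hyperbolic cosine, `arcosh t = ln (t + √(t²-1))`. -/
noncomputable def arcosh (t : ℝ) : ℝ := Real.log (t + Real.sqrt (t ^ 2 - 1))

/-- Principal branch `S(w)` of the inverse sine on the cut plane
`ℂ ∖ ((-∞,-1) ∪ (1,∞))`. -/
noncomputable def S (w : ℂ) : ℂ :=
  (Real.arcsin (beta w) : ℝ) + Complex.I * (Real.sign w.im : ℝ) * (arcosh (alpha w) : ℝ)

lemma cosh_arcosh {t : ℝ} (ht : 1 ≤ t) : Real.cosh (arcosh t) = t := by
  have h1 : 0 ≤ t^2 - 1 := by nlinarith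
  have hs : Real.sqrt (t^2-1) ^ 2 = t^2 - 1 := Real.sq_sqrt h1
  have hs0 : 0 ≤ Real.sqrt (t^2-1) := Real.sqrt_nonneg _
  have hu : 0 < t + Real.sqrt (t^2-1) := by nlinarith
  rw [arcosh, Real.cosh_eq, Real.exp_log hu, Real.exp_neg, Real.exp_log hu]
  field_simp
  nlinarith [hs]

lemma sinh_arcosh {t : ℝ} (ht : 1 ≤ t) : Real.sinh (arcosh t) = Real.sqrt (t^2 - 1) := by
  have h1 : 0 ≤ t^2 - 1 := by nlinarith
  have hs : Real.sqrt (t^2-1) ^ 2 = t^2 - 1 := Real.sq_sqrt h1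
  have hs0 : 0 ≤ Real.sqrt (t^2-1) := Real.sqrt_nonneg _
  have hu : 0 < t + Real.sqrt (t^2-1) := by nlinarith
  rw [arcosh, Real.sinh_eq, Real.exp_log hu, Real.exp_neg, Real.exp_log hu]
  field_simp
  nlinarith [hs]

theorem stmt9 (z : ℂ) (h : z.im ≠ 0 ∨ z.re ^ 2 ≤ 1) : Complex.sin (S z) = z := by
  have hr1 : ‖z - 1‖ ^ 2 = (z.re - 1)^2 + z.im^2 := by
    rw [Complex.sq_norm, Complex.normSq_apply]
    simp
    ring
  have hr2 : ‖z + 1‖ ^ 2 = (z.re + 1)^2 + z.im^2 := by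
    rw [Complex.sq_norm, Complex.normSq_apply]
    simp
    ring
  have hr1n : 0 ≤ ‖z - 1‖ := norm_nonneg _
  have hr2n : 0 ≤ ‖z + 1‖ := norm_nonneg _
  have h2 : ((z+1) - (z-1)) = 2 := by ring
  have h2' : ‖(z+1) - (z-1)‖ = 2 := by rw [h2]; simp
  have htri1 : ‖z+1‖ - ‖z-1‖ ≤ 2 := by
    have := norm_sub_norm_le (z+1) (z-1)
    rw [h2'] at this; linarith
  have htri2 : ‖z-1‖ - ‖z+1‖ ≤ 2 := by
    have := norm_sub_norm_le (z-1) (z+1)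
    have e : ‖(z-1)-(z+1)‖ = 2 := by
      have : ((z-1) - (z+1)) = -2 := by ring
      rw [this]; simp
    rw [e] at this; linarith
  have htri3 : 2 ≤ ‖z+1‖ + ‖z-1‖ := by
    have h3 := norm_add_le (z+1) (1-z)
    have e1 : (z+1)+(1-z) = 2 := by ring
    have e2 : ‖1-z‖ = ‖z-1‖ := norm_sub_rev 1 z
    rw [e1, e2] at h3
    simpa using h3
  -- basic ranges
  have hβle : beta z ≤ 1 := by unfold beta; linarith
  have hβge : -1 ≤ beta z := by unfold beta; linarith
  have hαge : 1 ≤ alpha z := by unfold alpha; linarith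
  -- key algebraic identities
  have hab : alpha z * beta z = z.re := by
    unfold alpha beta
    nlinarith [hr1, hr2]
  have hprod : (1 - beta z ^ 2) * (alpha z ^ 2 - 1) = z.im ^ 2 := by
    unfold alpha beta
    nlinarith [hr1, hr2]
  -- trig values
  have hsin : Real.sin (Real.arcsin (beta z)) = beta z := Real.sin_arcsin hβge hβle
  have hcos : Real.cos (Real.arcsin (beta z)) = Real.sqrt (1 - beta z ^ 2) :=
    Real.cos_arcsin _
  have hcosh : Real.cosh (arcosh (alpha z)) = alpha z := cosh_arcosh hαge
  have hsinh : Real.sinh (arcosh (alpha z)) = Real.sqrt (alpha z ^ 2 - 1) := sinh_arcosh hαge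
  have hsqrt : Real.sqrt (1 - beta z ^ 2) * Real.sqrt (alpha z ^ 2 - 1) = |z.im| := by
    rw [← Real.sqrt_mul (by nlinarith), hprod, Real.sqrt_sq_eq_abs]
  set s : ℝ := Real.sign z.im with hs
  -- expand sin (S z)
  have hS : S z = (Real.arcsin (beta z) : ℂ) + (((s * arcosh (alpha z) : ℝ)) : ℂ) * I := by
    unfold S
    push_cast
    ring
  have key : Complex.sin (S z) =
      ((beta z * Real.cosh (s * arcosh (alpha z)) : ℝ) : ℂ) +
      ((Real.sqrt (1 - beta z ^ 2) * Real.sinh (s * arcosh (alpha z)) : ℝ) : ℂ) * I := by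
    rw [hS, Complex.sin_add, Complex.cos_mul_I, Complex.sin_mul_I,
      ← Complex.ofReal_cosh, ← Complex.ofReal_sinh,
      ← Complex.ofReal_sin, ← Complex.ofReal_cos, hsin, hcos]
    push_cast
    ring
  rw [key]
  have hre : beta z * Real.cosh (s * arcosh (alpha z)) = z.re ∧
      Real.sqrt (1 - beta z ^ 2) * Real.sinh (s * arcosh (alpha z)) = z.im := by
    rcases lt_trichotomy z.im 0 with hy | hy | hy
    · have hs1 : s = -1 := by rw [hs]; exact Real.sign_of_neg hy
      rw [hs1]
      simp only [neg_one_mul, Real.cosh_neg, Real.sinh_neg, hcosh, hsinh]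
      constructor
      · linarith [hab]
      · rw [mul_neg, hsqrt, abs_of_neg hy]; ring
    · -- z.im = 0, so x^2 ≤ 1
      have hx2le : z.re ^ 2 ≤ 1 := by
        rcases h with h' | h'
        · exact absurd hy h'
        · exact h'
      have hs0 : s = 0 := by rw [hs, hy, Real.sign_zero]
      have h1x : 0 ≤ 1 - z.re := by nlinarith
      have h1x' : 0 ≤ z.re + 1 := by nlinarith
      have hx1 : ‖z - 1‖ = 1 - z.re := by
        have e : ‖z - 1‖ ^ 2 = (1 - z.re) ^ 2 := by rw [hr1, hy]; ring
        calc ‖z - 1‖ = Real.sqrt (‖z - 1‖ ^ 2) :=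
              (Real.sqrt_sq hr1n).symm
          _ = Real.sqrt ((1 - z.re) ^ 2) := by rw [e]
          _ = 1 - z.re := Real.sqrt_sq h1x
      have hx2 : ‖z + 1‖ = z.re + 1 := by
        have e : ‖z + 1‖ ^ 2 = (z.re + 1) ^ 2 := by rw [hr2, hy]; ring
        calc ‖z + 1‖ = Real.sqrt (‖z + 1‖ ^ 2) :=
              (Real.sqrt_sq hr2n).symm
          _ = Real.sqrt ((z.re + 1) ^ 2) := by rw [e]
          _ = z.re + 1 := Real.sqrt_sq h1x'
      have hbx : beta z = z.re := by unfold beta; rw [hx1, hx2]; ring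
      rw [hs0, hy, hbx]
      simp
    · have hs1 : s = 1 := by rw [hs]; exact Real.sign_of_pos hy
      rw [hs1, one_mul, hcosh, hsinh]
      constructor
      · linarith [hab]
      · rw [hsqrt, abs_of_pos hy]
  apply Complex.ext <;> simp [hre.1, hre.2]
end

section
/- Let z = x + iy be a complex number with y ≠ 0 or x ≥ 1, let r₁ = |z−1|, r₂ = |z+1|, α = (r₁+r₂)/2, β = (r₂−r₁)/2, and let C(z) = arcosh(α) + i·sign(y)·arccos(β). Then cosh(C(z)) = z, where cosh is the complex hyperbolic cosine function. -/
open Complex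

/-- Principal branch `C(w)` of the inverse hyperbolic cosine on the cut plane
`ℂ ∖ (-∞, 1)`. -/
noncomputable def C (w : ℂ) : ℂ :=
  (arcosh (alpha w) : ℝ) + Complex.I * (Real.sign w.im : ℝ) * (Real.arccos (beta w) : ℝ)

lemma cosh_sinh_arcosh {t : ℝ} (ht : 1 ≤ t) :
    Real.cosh (arcosh t) = t ∧ Real.sinh (arcosh t) = Real.sqrt (t ^ 2 - 1) := by
  have h0 : (0:ℝ) ≤ t ^ 2 - 1 := by nlinarith
  set s := Real.sqrt (t ^ 2 - 1) with hs
  have hs0 : 0 ≤ s := Real.sqrt_nonneg _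
  have hs2 : s ^ 2 = t ^ 2 - 1 := Real.sq_sqrt h0
  have hpos : 0 < t + s := by linarith
  have hexp : Real.exp (arcosh t) = t + s := Real.exp_log hpos
  have hinv : Real.exp (-(arcosh t)) = t - s := by
    rw [Real.exp_neg, hexp, inv_eq_one_div, eq_comm, eq_div_iff hpos.ne']
    nlinarith
  constructor
  · rw [Real.cosh_eq, hexp, hinv]; ring
  · rw [Real.sinh_eq, hexp, hinv]; ring

theorem stmt15 (z : ℂ) (h : z.im ≠ 0 ∨ 1 ≤ z.re) : Complex.cosh (C z) = z := by
  have hr1 : ‖z - 1‖ ^ 2 = (z.re - 1) ^ 2 + z.im ^ 2 := by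
    rw [Complex.sq_norm, Complex.normSq_apply]
    simp
    ring
  have hr2 : ‖z + 1‖ ^ 2 = (z.re + 1) ^ 2 + z.im ^ 2 := by
    rw [Complex.sq_norm, Complex.normSq_apply]
    simp
    ring
  set x := z.re with hx
  set y := z.im with hyd
  set r1 := ‖z - 1‖ with hr1def
  set r2 := ‖z + 1‖ with hr2def
  have hr1' : 0 ≤ r1 := norm_nonneg _
  have hr2' : 0 ≤ r2 := norm_nonneg _
  -- triangle inequalities
  have ht1 : r2 ≤ r1 + 2 := by
    have h1 : ‖(z - 1) + 2‖ ≤ r1 + ‖(2 : ℂ)‖ := norm_add_le _ _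
    have h2 : (z - 1) + 2 = z + 1 := by ring
    have h3 : ‖(2 : ℂ)‖ = 2 := by norm_num
    rw [h2, h3] at h1
    exact h1
  have ht2 : r1 ≤ r2 + 2 := by
    have h1 : ‖(z + 1) + (-2)‖ ≤ r2 + ‖(-2 : ℂ)‖ := norm_add_le _ _
    have h2 : (z + 1) + (-2) = z - 1 := by ring
    have h3 : ‖(-2 : ℂ)‖ = 2 := by norm_num
    rw [h2, h3] at h1
    exact h1
  have ht3 : 2 ≤ r1 + r2 := by
    have h1 : ‖(z + 1) + (-(z - 1))‖ ≤ r2 + ‖-(z - 1)‖ :=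
      norm_add_le _ _
    have h2 : (z + 1) + (-(z - 1)) = 2 := by ring
    rw [h2, norm_neg] at h1
    have h3 : ‖(2 : ℂ)‖ = 2 := by norm_num
    rw [h3] at h1
    linarith
  have hαval : alpha z = (r1 + r2) / 2 := rfl
  have hβval : beta z = (r2 - r1) / 2 := rfl
  set a := alpha z with ha
  set b := beta z with hb
  have hα1 : 1 ≤ a := by rw [hαval]; linarith
  have hβle : b ≤ 1 := by rw [hβval]; linarith
  have hβge : -1 ≤ b := by rw [hβval]; linarith
  have hab : a * b = x := by
    rw [hαval, hβval]; linear_combination hr2 / 4 - hr1 / 4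
  have hS : a ^ 2 + b ^ 2 = x ^ 2 + y ^ 2 + 1 := by
    rw [hαval, hβval]; linear_combination hr1 / 2 + hr2 / 2
  have hsq : (a ^ 2 - 1) * (1 - b ^ 2) = y ^ 2 := by
    linear_combination hS - (a * b + x) * hab
  obtain ⟨hcosh, hsinh⟩ := cosh_sinh_arcosh hα1
  have hCz : C z = (arcosh a : ℂ) + ((Real.sign y * Real.arccos b : ℝ) : ℂ) * I := by
    simp only [C, ← ha, ← hb, ← hyd]
    push_cast
    ring
  rw [hCz, Complex.cosh_add, Complex.cosh_mul_I, Complex.sinh_mul_I,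
    ← Complex.ofReal_cosh, ← Complex.ofReal_cos, ← Complex.ofReal_sinh, ← Complex.ofReal_sin,
    ← Complex.ofReal_mul, ← mul_assoc, ← Complex.ofReal_mul]
  have hsin : Real.sin (Real.arccos b) = Real.sqrt (1 - b ^ 2) := Real.sin_arccos b
  have hcos : Real.cos (Real.arccos b) = b := Real.cos_arccos hβge hβle
  have hgoal : ∀ p q : ℝ, p = x → q = y → (p : ℂ) + (q : ℂ) * I = z := by
    intro p q hp hq
    rw [hp, hq, hx, hyd]
    exact Complex.re_add_im z
  rcases eq_or_ne y 0 with hy | hy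
  · -- real case: y = 0, 1 ≤ x
    have hxge : 1 ≤ x := by
      rcases h with h | h
      · exact absurd hy h
      · exact h
    have hr1sq : r1 ^ 2 = (x - 1) ^ 2 := by rw [hr1, hy]; ring
    have hr2sq : r2 ^ 2 = (x + 1) ^ 2 := by rw [hr2, hy]; ring
    have hr1x : r1 = x - 1 := by
      calc r1 = Real.sqrt (r1 ^ 2) := (Real.sqrt_sq hr1').symm
        _ = Real.sqrt ((x - 1) ^ 2) := by rw [hr1sq]
        _ = |x - 1| := Real.sqrt_sq_eq_abs _
        _ = x - 1 := abs_of_nonneg (by linarith)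
    have hr2x : r2 = x + 1 := by
      calc r2 = Real.sqrt (r2 ^ 2) := (Real.sqrt_sq hr2').symm
        _ = Real.sqrt ((x + 1) ^ 2) := by rw [hr2sq]
        _ = |x + 1| := Real.sqrt_sq_eq_abs _
        _ = x + 1 := abs_of_nonneg (by linarith)
    have hax : a = x := by rw [hαval, hr1x, hr2x]; ring
    rw [hy, Real.sign_zero]
    apply hgoal
    · rw [hcosh, hax]; simp
    · simp [hy]
  · -- y ≠ 0
    have hsign : Real.sign y * |y| = y := by
      rcases lt_or_gt_of_ne hy with h' | h'
      · rw [Real.sign_of_neg h', abs_of_neg h']; ring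
      · rw [Real.sign_of_pos h', abs_of_pos h']; ring
    apply hgoal
    · have hc1 : Real.cos (Real.sign y * Real.arccos b) = b := by
        rcases Real.sign_apply_eq_of_ne_zero y hy with hs | hs <;>
          rw [hs] <;> simp [hcos]
      rw [hc1, hcosh, hab]
    · have hs1 : Real.sin (Real.sign y * Real.arccos b) =
          Real.sign y * Real.sqrt (1 - b ^ 2) := by
        rcases Real.sign_apply_eq_of_ne_zero y hy with hs | hs <;>
          rw [hs] <;> simp [hsin]
      rw [hs1, hsinh]
      have hmul : Real.sqrt (a ^ 2 - 1) * Real.sqrt (1 - b ^ 2) =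
          Real.sqrt ((a ^ 2 - 1) * (1 - b ^ 2)) :=
        (Real.sqrt_mul (by nlinarith) _).symm
      calc Real.sqrt (a ^ 2 - 1) * (Real.sign y * Real.sqrt (1 - b ^ 2))
          = Real.sign y * (Real.sqrt (a ^ 2 - 1) * Real.sqrt (1 - b ^ 2)) := by ring
        _ = Real.sign y * Real.sqrt (y ^ 2) := by rw [hmul, hsq]
        _ = Real.sign y * |y| := by rw [Real.sqrt_sq_eq_abs]
        _ = y := hsign
end

section
/- Let z = x + iy be a complex number with y ≠ 0, and let C(w) = arcosh(α(w)) + i·sign(Im w)·arccos(β(w)), where α(w) = (|w−1|+|w+1|)/2 and β(w) = (|w+1|−|w−1|)/2. Then C(−z) = −i·sign(y)·π + C(z); that is, the reflection formula for the principal inverse hyperbolic cosine carries −iπ for y > 0 and +iπ for y < 0 (correcting the sign in DLMF Eq. 4.37.11). -/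
open Complex

theorem stmt16 (z : ℂ) (h : z.im ≠ 0) :
    C (-z) = -Complex.I * (Real.sign z.im : ℝ) * (Real.pi : ℝ) + C z := by
  have h1 : -z - 1 = -(z + 1) := by ring
  have h2 : -z + 1 = -(z - 1) := by ring
  have ha : alpha (-z) = alpha z := by
    unfold alpha; rw [h1, h2, norm_neg, norm_neg]; ring
  have hb : beta (-z) = -beta z := by
    unfold beta; rw [h1, h2, norm_neg, norm_neg]; ring
  simp only [C, ha, hb, Real.arccos_neg, neg_im, Real.sign_neg]
  push_cast
  ring
end

section
/- Let z = x + iy be a complex number with y ≠ 0, and let C(w) = arcosh(α(w)) + i·sign(Im w)·arccos(β(w)), where α(w) = (|w−1|+|w+1|)/2 and β(w) = (|w+1|−|w−1|)/2. Then the principal inverse hyperbolic secant Asech(w) := C(1/w) satisfies Asech(−z) = i·sign(y)·π + Asech(z); that is, the reflection formula carries +iπ for y > 0 and −iπ for y < 0 (correcting the sign in DLMF Eq. 4.37.14). -/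
open Complex

/-- Principal branch of the inverse hyperbolic secant on the cut plane
`ℂ ∖ ((-∞,0] ∪ (1,∞))`. -/
noncomputable def Asech (w : ℂ) : ℂ := C (1 / w)

theorem stmt17 (z : ℂ) (h : z.im ≠ 0) :
    Asech (-z) = Complex.I * (Real.sign z.im : ℝ) * (Real.pi : ℝ) + Asech z := by
  have hz : z ≠ 0 := fun h0 => h (by simp [h0])
  have hns : (0:ℝ) < Complex.normSq z := Complex.normSq_pos.2 hz
  set w := 1/z with hw
  have him : w.im = -z.im / Complex.normSq z := by
    rw [hw, one_div, Complex.inv_im]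
  have hneg : 1/(-z) = -w := by rw [hw, div_neg]
  have ha : alpha (-w) = alpha w := by
    unfold alpha
    rw [show -w - 1 = -(w+1) by ring, show -w + 1 = -(w-1) by ring,
      norm_neg, norm_neg]
    ring
  have hb : beta (-w) = -beta w := by
    unfold beta
    rw [show -w - 1 = -(w+1) by ring, show -w + 1 = -(w-1) by ring,
      norm_neg, norm_neg]
    ring
  have himneg : (-w).im = -w.im := by simp
  unfold Asech C
  rw [hneg, ha, hb, Real.arccos_neg, himneg]
  rcases h.lt_or_gt with hlt | hgt
  · have hwpos : 0 < w.im := by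
      rw [him]; exact div_pos (by linarith) hns
    rw [Real.sign_of_neg hlt, Real.sign_of_pos hwpos,
      Real.sign_of_neg (by linarith : -w.im < 0), ← hw]
    push_cast
    ring
  · have hwneg : w.im < 0 := by
      rw [him]; exact div_neg_of_neg_of_pos (by linarith) hns
    rw [Real.sign_of_pos hgt, Real.sign_of_neg hwneg,
      Real.sign_of_pos (by linarith : 0 < -w.im), ← hw]
    push_cast
    ring
end
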